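/- Along every Hamiltonian flow line of P the momenta τ and q_φ are constant (so the energy E := τ and the angular momentum L := −q_φ are constants of motion), p := 2P is constant, and the Carter constant K := q_θ² + 𝐃²/sin²θ + p·a²·cos²θ is constant along the flow line; moreover at every point of the flow line one has the second expression K = 𝐏²/Δ − Δ·ξ² − p·r². -/

import Mathlib

/-!
STATEMENT 0 (Carter constant for the Kerr–Newman Hamiltonian flow).

Along every Hamiltonian flow line of `P` the momenta `τ` and `q_φ` are constant
(so the energy `E := τ` and the angular momentum `L := −q_φ` are constants of
motion), `p := 2P` is constant, and the Carter constant
`K := q_θ² + 𝐃²/sin²θ + p·a²·cos²θ` is constant along the flow line; moreover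
at every point of the flow line one has `K = 𝐏²/Δ − Δ·ξ² − p·r²`.
-/

noncomputable section
open Real Set

namespace Stmt0

/-- `Δ(r) = r² − 2Mr + a² + Q²`. -/
def Δ (M a Q r : ℝ) : ℝ := r ^ 2 - 2 * M * r + a ^ 2 + Q ^ 2

/-- Outer horizon `r₊ = M + √(M² − (a² + Q²))`. -/
def rplus (M a Q : ℝ) : ℝ := M + Real.sqrt (M ^ 2 - (a ^ 2 + Q ^ 2))

/-- `ρ²(r,θ) = r² + a²cos²θ`. -/
def rho2 (a r θ : ℝ) : ℝ := r ^ 2 + a ^ 2 * Real.cos θ ^ 2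

/-- `σ²(r,θ) = (r²+a²)² − a²Δ(r)sin²θ`. -/
def sigma2 (M a Q r θ : ℝ) : ℝ :=
  (r ^ 2 + a ^ 2) ^ 2 - a ^ 2 * Δ M a Q r * Real.sin θ ^ 2

/-- The Hamiltonian `P`, the principal symbol of half the d'Alembertian of the
Kerr–Newman metric on block I. -/
def P (M a Q : ℝ) (_t r θ _φ τ ξ qθ qφ : ℝ) : ℝ :=
  (1 / (2 * rho2 a r θ)) *
    ((sigma2 M a Q r θ / Δ M a Q r) * τ ^ 2
      - (2 * a * (Q ^ 2 - 2 * M * r) / Δ M a Q r) * qφ * τ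
      - ((Δ M a Q r - a ^ 2 * Real.sin θ ^ 2) / (Δ M a Q r * Real.sin θ ^ 2)) * qφ ^ 2
      - Δ M a Q r * ξ ^ 2 - qθ ^ 2)

/-- A Hamiltonian flow line of `P` in block I : a `C¹` curve
`s ↦ (t,r,θ,φ;τ,ξ,q_θ,q_φ)(s)` with `r(s) > r₊` and `0 < θ(s) < π` satisfying
Hamilton's equations `dx/ds = ∂P/∂p`, `dp/ds = −∂P/∂x`. -/
structure FlowLine (M a Q : ℝ) where
  t : ℝ → ℝ
  r : ℝ → ℝ
  θ : ℝ → ℝ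
  φ : ℝ → ℝ
  τ : ℝ → ℝ
  ξ : ℝ → ℝ
  qθ : ℝ → ℝ
  qφ : ℝ → ℝ
  hr : ∀ s, rplus M a Q < r s
  hθ : ∀ s, θ s ∈ Set.Ioo 0 Real.pi
  eq_t : ∀ s, HasDerivAt t
    (deriv (fun u => P M a Q (t s) (r s) (θ s) (φ s) u (ξ s) (qθ s) (qφ s)) (τ s)) s
  eq_r : ∀ s, HasDerivAt r
    (deriv (fun u => P M a Q (t s) (r s) (θ s) (φ s) (τ s) u (qθ s) (qφ s)) (ξ s)) s
  eq_θ : ∀ s, HasDerivAt θ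
    (deriv (fun u => P M a Q (t s) (r s) (θ s) (φ s) (τ s) (ξ s) u (qφ s)) (qθ s)) s
  eq_φ : ∀ s, HasDerivAt φ
    (deriv (fun u => P M a Q (t s) (r s) (θ s) (φ s) (τ s) (ξ s) (qθ s) u) (qφ s)) s
  eq_τ : ∀ s, HasDerivAt τ
    (-deriv (fun u => P M a Q u (r s) (θ s) (φ s) (τ s) (ξ s) (qθ s) (qφ s)) (t s)) s
  eq_ξ : ∀ s, HasDerivAt ξ
    (-deriv (fun u => P M a Q (t s) u (θ s) (φ s) (τ s) (ξ s) (qθ s) (qφ s)) (r s)) s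
  eq_qθ : ∀ s, HasDerivAt qθ
    (-deriv (fun u => P M a Q (t s) (r s) u (φ s) (τ s) (ξ s) (qθ s) (qφ s)) (θ s)) s
  eq_qφ : ∀ s, HasDerivAt qφ
    (-deriv (fun u => P M a Q (t s) (r s) (θ s) u (τ s) (ξ s) (qθ s) (qφ s)) (φ s)) s

/-- `p := 2P` evaluated along the flow line. -/
def pval (M a Q : ℝ) (γ : FlowLine M a Q) (s : ℝ) : ℝ :=
  2 * P M a Q (γ.t s) (γ.r s) (γ.θ s) (γ.φ s) (γ.τ s) (γ.ξ s) (γ.qθ s) (γ.qφ s)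

/-- `𝐃 := L − aE sin²θ` evaluated along the flow line (with `E = τ`, `L = −q_φ`). -/
def Dd (M a Q : ℝ) (γ : FlowLine M a Q) (s : ℝ) : ℝ :=
  (-γ.qφ s) - a * γ.τ s * Real.sin (γ.θ s) ^ 2

/-- `𝐏 := (r²+a²)E − aL` evaluated along the flow line. -/
def Pb (M a Q : ℝ) (γ : FlowLine M a Q) (s : ℝ) : ℝ :=
  ((γ.r s) ^ 2 + a ^ 2) * γ.τ s - a * (-γ.qφ s)

/-- The Carter constant `K = q_θ² + 𝐃²/sin²θ + p a² cos²θ` along the flow line. -/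
def Kc (M a Q : ℝ) (γ : FlowLine M a Q) (s : ℝ) : ℝ :=
  (γ.qθ s) ^ 2 + (Dd M a Q γ s) ^ 2 / Real.sin (γ.θ s) ^ 2
    + pval M a Q γ s * a ^ 2 * Real.cos (γ.θ s) ^ 2

def Pbb (a r τ qφ : ℝ) : ℝ := (r ^ 2 + a ^ 2) * τ + a * qφ
def Dbb (a θ τ qφ : ℝ) : ℝ := qφ + a * τ * Real.sin θ ^ 2

/-- `∂P/∂r` (raw quotient-rule form). -/
def Vr (M a Q r θ τ ξ qθ qφ : ℝ) : ℝ :=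
  (((2 * Pbb a r τ qφ * (2 * r * τ) * Δ M a Q r - Pbb a r τ qφ ^ 2 * (2 * r - 2 * M)) / Δ M a Q r ^ 2
      - (2 * r - 2 * M) * ξ ^ 2) * (2 * rho2 a r θ)
    - (Pbb a r τ qφ ^ 2 / Δ M a Q r - Δ M a Q r * ξ ^ 2
        - (qθ ^ 2 + Dbb a θ τ qφ ^ 2 / Real.sin θ ^ 2)) * (2 * (2 * r)))
    / (2 * rho2 a r θ) ^ 2

/-- `∂P/∂θ` (raw quotient-rule form). -/
def Vθ (M a Q r θ τ ξ qθ qφ : ℝ) : ℝ :=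
  ((0 - (2 * Dbb a θ τ qφ * (a * τ * (2 * Real.sin θ * Real.cos θ)) * Real.sin θ ^ 2
        - Dbb a θ τ qφ ^ 2 * (2 * Real.sin θ * Real.cos θ)) / (Real.sin θ ^ 2) ^ 2)
      * (2 * rho2 a r θ)
    - (Pbb a r τ qφ ^ 2 / Δ M a Q r - Δ M a Q r * ξ ^ 2 - qθ ^ 2
        - Dbb a θ τ qφ ^ 2 / Real.sin θ ^ 2)
      * (2 * (a ^ 2 * (2 * Real.cos θ * -Real.sin θ))))
    / (2 * rho2 a r θ) ^ 2

lemma slice_xi (M a Q t r θ φ τ qθ qφ ξ0 : ℝ) (hρ : rho2 a r θ ≠ 0) :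
    HasDerivAt (fun u => P M a Q t r θ φ τ u qθ qφ)
      (-(Δ M a Q r * ξ0) / rho2 a r θ) ξ0 := by
  have h1 : HasDerivAt (fun u : ℝ => Δ M a Q r * u ^ 2) (Δ M a Q r * (2 * ξ0)) ξ0 := by
    simpa using (hasDerivAt_pow 2 ξ0).const_mul (Δ M a Q r)
  have h2 := hasDerivAt_const (𝕜 := ℝ) ξ0
      ((sigma2 M a Q r θ / Δ M a Q r) * τ ^ 2
        - (2 * a * (Q ^ 2 - 2 * M * r) / Δ M a Q r) * qφ * τ
        - ((Δ M a Q r - a ^ 2 * Real.sin θ ^ 2) / (Δ M a Q r * Real.sin θ ^ 2)) * qφ ^ 2)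
  have h3 := ((h2.sub h1).sub_const (qθ ^ 2)).const_mul (1 / (2 * rho2 a r θ))
  refine HasDerivAt.congr_deriv (h3) ?_
  field_simp
  ring

lemma slice_qt (M a Q t r θ φ τ ξ qφ qθ0 : ℝ) (hρ : rho2 a r θ ≠ 0) :
    HasDerivAt (fun u => P M a Q t r θ φ τ ξ u qφ)
      (-qθ0 / rho2 a r θ) qθ0 := by
  have h1 : HasDerivAt (fun u : ℝ => u ^ 2) (2 * qθ0) qθ0 := by
    simpa using hasDerivAt_pow 2 qθ0
  have h2 := hasDerivAt_const (𝕜 := ℝ) qθ0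
      ((sigma2 M a Q r θ / Δ M a Q r) * τ ^ 2
        - (2 * a * (Q ^ 2 - 2 * M * r) / Δ M a Q r) * qφ * τ
        - ((Δ M a Q r - a ^ 2 * Real.sin θ ^ 2) / (Δ M a Q r * Real.sin θ ^ 2)) * qφ ^ 2
        - Δ M a Q r * ξ ^ 2)
  have h3 := (h2.sub h1).const_mul (1 / (2 * rho2 a r θ))
  refine HasDerivAt.congr_deriv (h3) ?_
  field_simp
  ring

set_option maxHeartbeats 1000000 in
lemma slice_r (M a Q t θ φ τ ξ qθ qφ r0 : ℝ) (hΔ : Δ M a Q r0 ≠ 0)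
    (hρ : rho2 a r0 θ ≠ 0) (hs : Real.sin θ ≠ 0) :
    HasDerivAt (fun u => P M a Q t u θ φ τ ξ qθ qφ) (Vr M a Q r0 θ τ ξ qθ qφ) r0 := by
  have h1 : (r0 ^ 2 - 2 * M * r0 + a ^ 2 + Q ^ 2) ≠ 0 := by simpa [Δ] using hΔ
  have h2 : (r0 ^ 2 + a ^ 2 * Real.cos θ ^ 2) ≠ 0 := by simpa [rho2] using hρ
  have hu2 : HasDerivAt (fun u : ℝ => u ^ 2) (2 * r0) r0 := by simpa using hasDerivAt_pow 2 r0
  have hDraw : HasDerivAt (fun u : ℝ => u ^ 2 - 2 * M * u + a ^ 2 + Q ^ 2) (2 * r0 - 2 * M) r0 := by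
    have h := ((hu2.sub ((hasDerivAt_id r0).const_mul (2 * M))).add_const (a ^ 2)).add_const (Q ^ 2)
    refine HasDerivAt.congr_deriv (h) ?_; ring
  have hD : HasDerivAt (fun u : ℝ => Δ M a Q u) (2 * r0 - 2 * M) r0 := hDraw
  have hPbraw : HasDerivAt (fun u : ℝ => (u ^ 2 + a ^ 2) * τ + a * qφ) (2 * r0 * τ) r0 := by
    have h := ((hu2.add_const (a ^ 2)).mul_const τ).add_const (a * qφ)
    convert h using 1
  have hPbf : HasDerivAt (fun u : ℝ => Pbb a u τ qφ) (2 * r0 * τ) r0 := hPbraw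
  have hPb2 : HasDerivAt (fun u : ℝ => Pbb a u τ qφ ^ 2)
      (2 * Pbb a r0 τ qφ * (2 * r0 * τ)) r0 := by
    refine HasDerivAt.congr_deriv (hPbf.pow 2) ?_; push_cast; ring
  have hA := ((hPb2.div hD hΔ).sub (hD.mul_const (ξ ^ 2))).sub_const
      (qθ ^ 2 + Dbb a θ τ qφ ^ 2 / Real.sin θ ^ 2)
  have hDρraw : HasDerivAt (fun u : ℝ => 2 * (u ^ 2 + a ^ 2 * Real.cos θ ^ 2)) (2 * (2 * r0)) r0 :=
    (hu2.add_const (a ^ 2 * Real.cos θ ^ 2)).const_mul 2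
  have hDρ : HasDerivAt (fun u : ℝ => 2 * rho2 a u θ) (2 * (2 * r0)) r0 := hDρraw
  have hden : 2 * rho2 a r0 θ ≠ 0 := mul_ne_zero two_ne_zero hρ
  have hF := hA.div hDρ hden
  have hev : (fun u => P M a Q t u θ φ τ ξ qθ qφ) =ᶠ[nhds r0]
      (fun u => (Pbb a u τ qφ ^ 2 / Δ M a Q u - Δ M a Q u * ξ ^ 2
          - (qθ ^ 2 + Dbb a θ τ qφ ^ 2 / Real.sin θ ^ 2)) / (2 * rho2 a u θ)) := by
    have hc1 : ContinuousAt (fun u : ℝ => Δ M a Q u) r0 := by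
      simp only [Δ]; fun_prop
    have hc2 : ContinuousAt (fun u : ℝ => u ^ 2 + a ^ 2 * Real.cos θ ^ 2) r0 := by fun_prop
    have he1 := hc1.eventually_ne hΔ
    have he2 := hc2.eventually_ne h2
    filter_upwards [he1, he2] with u hu1 hu2'
    simp only [P, sigma2, rho2, Pbb, Dbb]
    field_simp
    unfold Δ
    ring
  exact hF.congr_of_eventuallyEq hev

set_option maxHeartbeats 1000000 in
lemma slice_th (M a Q t r φ τ ξ qθ qφ θ0 : ℝ) (hΔ : Δ M a Q r ≠ 0)
    (hr : r ≠ 0) (hs : Real.sin θ0 ≠ 0) :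
    HasDerivAt (fun u => P M a Q t r u φ τ ξ qθ qφ) (Vθ M a Q r θ0 τ ξ qθ qφ) θ0 := by
  have h1 : (r ^ 2 - 2 * M * r + a ^ 2 + Q ^ 2) ≠ 0 := by simpa [Δ] using hΔ
  have hsn2 : HasDerivAt (fun u : ℝ => Real.sin u ^ 2) (2 * Real.sin θ0 * Real.cos θ0) θ0 := by
    have h := (Real.hasDerivAt_sin θ0).pow 2
    refine HasDerivAt.congr_deriv (h) ?_; push_cast; ring
  have hcos2 : HasDerivAt (fun u : ℝ => Real.cos u ^ 2) (2 * Real.cos θ0 * -Real.sin θ0) θ0 := by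
    have h := (Real.hasDerivAt_cos θ0).pow 2
    refine HasDerivAt.congr_deriv (h) ?_; push_cast; ring
  have hDbraw : HasDerivAt (fun u : ℝ => qφ + a * τ * Real.sin u ^ 2)
      (a * τ * (2 * Real.sin θ0 * Real.cos θ0)) θ0 := (hsn2.const_mul (a * τ)).const_add qφ
  have hDbf : HasDerivAt (fun u : ℝ => Dbb a u τ qφ)
      (a * τ * (2 * Real.sin θ0 * Real.cos θ0)) θ0 := hDbraw
  have hDb2 : HasDerivAt (fun u : ℝ => Dbb a u τ qφ ^ 2)
      (2 * Dbb a θ0 τ qφ * (a * τ * (2 * Real.sin θ0 * Real.cos θ0))) θ0 := by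
    refine HasDerivAt.congr_deriv (hDbf.pow 2) ?_; push_cast; ring
  have hsn2ne : Real.sin θ0 ^ 2 ≠ 0 := pow_ne_zero 2 hs
  have hbr := (hasDerivAt_const (𝕜 := ℝ) θ0
      (Pbb a r τ qφ ^ 2 / Δ M a Q r - Δ M a Q r * ξ ^ 2 - qθ ^ 2)).sub
      (hDb2.div hsn2 hsn2ne)
  have hDρraw : HasDerivAt (fun u : ℝ => 2 * (r ^ 2 + a ^ 2 * Real.cos u ^ 2))
      (2 * (a ^ 2 * (2 * Real.cos θ0 * -Real.sin θ0))) θ0 :=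
    ((hcos2.const_mul (a ^ 2)).const_add (r ^ 2)).const_mul 2
  have hDρ : HasDerivAt (fun u : ℝ => 2 * rho2 a r u)
      (2 * (a ^ 2 * (2 * Real.cos θ0 * -Real.sin θ0))) θ0 := hDρraw
  have hρ0 : rho2 a r θ0 ≠ 0 := by simp only [rho2]; positivity
  have hden : 2 * rho2 a r θ0 ≠ 0 := mul_ne_zero two_ne_zero hρ0
  have hF := hbr.div hDρ hden
  have hev : (fun u => P M a Q t r u φ τ ξ qθ qφ) =ᶠ[nhds θ0]
      (fun u => ((Pbb a r τ qφ ^ 2 / Δ M a Q r - Δ M a Q r * ξ ^ 2 - qθ ^ 2)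
          - Dbb a u τ qφ ^ 2 / Real.sin u ^ 2) / (2 * rho2 a r u)) := by
    have hc : ContinuousAt Real.sin θ0 := Real.continuous_sin.continuousAt
    have he := hc.eventually_ne hs
    filter_upwards [he] with u hu
    have h2 : (r ^ 2 + a ^ 2 * Real.cos u ^ 2) ≠ 0 := by positivity
    simp only [P, sigma2, rho2, Pbb, Dbb]
    field_simp
    unfold Δ
    ring
  exact hF.congr_of_eventuallyEq hev

set_option maxHeartbeats 1000000 in
/-- r-side: the derivative of `A := 𝐏²/Δ − Δξ²` along the flow is `2 p r r'`. -/
lemma LA (M a Q : ℝ) (R Θf T X Qθ Qφ : ℝ → ℝ) (s : ℝ) (vr vξ : ℝ)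
    (hvr : vr = -(Δ M a Q (R s) * X s) / rho2 a (R s) (Θf s))
    (hvξ : vξ = -Vr M a Q (R s) (Θf s) (T s) (X s) (Qθ s) (Qφ s))
    (hΔ : Δ M a Q (R s) ≠ 0) (hsn : Real.sin (Θf s) ≠ 0) (hρ : rho2 a (R s) (Θf s) ≠ 0)
    (hR : HasDerivAt R vr s) (hT : HasDerivAt T 0 s)
    (hX : HasDerivAt X vξ s) (hQφ : HasDerivAt Qφ 0 s) :
    HasDerivAt (fun x => Pbb a (R x) (T x) (Qφ x) ^ 2 / Δ M a Q (R x) - Δ M a Q (R x) * X x ^ 2)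
      (2 * R s * vr * ((Pbb a (R s) (T s) (Qφ s) ^ 2 / Δ M a Q (R s) - Δ M a Q (R s) * X s ^ 2
          - (Qθ s ^ 2 + Dbb a (Θf s) (T s) (Qφ s) ^ 2 / Real.sin (Θf s) ^ 2))
        / rho2 a (R s) (Θf s))) s := by
  have hR2 := hR.pow 2
  have hΔraw : HasDerivAt (fun x => R x ^ 2 - 2 * M * R x + a ^ 2 + Q ^ 2)
      (2 * R s * vr - 2 * M * vr) s := by
    have h := ((hR2.sub (hR.const_mul (2 * M))).add_const (a ^ 2)).add_const (Q ^ 2)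
    refine HasDerivAt.congr_deriv (h) ?_; push_cast; ring
  have hΔc : HasDerivAt (fun x => Δ M a Q (R x)) (2 * R s * vr - 2 * M * vr) s := hΔraw
  have hPbraw : HasDerivAt (fun x => (R x ^ 2 + a ^ 2) * T x + a * Qφ x)
      (2 * R s * vr * T s) s := by
    have h := ((hR2.add_const (a ^ 2)).mul hT).add (hQφ.const_mul a)
    refine HasDerivAt.congr_deriv (h) ?_; push_cast; ring
  have hPbf : HasDerivAt (fun x => Pbb a (R x) (T x) (Qφ x)) (2 * R s * vr * T s) s := hPbraw
  have hPb2 : HasDerivAt (fun x => Pbb a (R x) (T x) (Qφ x) ^ 2)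
      (2 * Pbb a (R s) (T s) (Qφ s) * (2 * R s * vr * T s)) s := by
    refine HasDerivAt.congr_deriv (hPbf.pow 2) ?_; push_cast; ring
  have hX2 : HasDerivAt (fun x => X x ^ 2) (2 * X s * vξ) s := by
    refine HasDerivAt.congr_deriv (hX.pow 2) ?_; push_cast; ring
  have h := (hPb2.div hΔc hΔ).sub (hΔc.mul hX2)
  refine HasDerivAt.congr_deriv (h) ?_
  subst hvr hvξ
  simp only [Vr]
  field_simp
  ring

set_option maxHeartbeats 1000000 in
/-- θ-side: the derivative of `B := q_θ² + 𝐃²/sin²θ` along the flow is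
`2 p a² sinθ cosθ θ'`. -/
lemma LB (M a Q : ℝ) (R Θf T X Qθ Qφ : ℝ → ℝ) (s : ℝ) (vθ vqθ : ℝ)
    (hvθ : vθ = -Qθ s / rho2 a (R s) (Θf s))
    (hvqθ : vqθ = -Vθ M a Q (R s) (Θf s) (T s) (X s) (Qθ s) (Qφ s))
    (hΔ : Δ M a Q (R s) ≠ 0) (hsn : Real.sin (Θf s) ≠ 0) (hρ : rho2 a (R s) (Θf s) ≠ 0)
    (hΘ : HasDerivAt Θf vθ s) (hT : HasDerivAt T 0 s)
    (hQθ : HasDerivAt Qθ vqθ s) (hQφ : HasDerivAt Qφ 0 s) :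
    HasDerivAt (fun x => Qθ x ^ 2 + Dbb a (Θf x) (T x) (Qφ x) ^ 2 / Real.sin (Θf x) ^ 2)
      (2 * a ^ 2 * Real.sin (Θf s) * Real.cos (Θf s) * vθ *
        ((Pbb a (R s) (T s) (Qφ s) ^ 2 / Δ M a Q (R s) - Δ M a Q (R s) * X s ^ 2
          - (Qθ s ^ 2 + Dbb a (Θf s) (T s) (Qφ s) ^ 2 / Real.sin (Θf s) ^ 2))
        / rho2 a (R s) (Θf s))) s := by
  have hsinc : HasDerivAt (fun x => Real.sin (Θf x)) (Real.cos (Θf s) * vθ) s :=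
    (Real.hasDerivAt_sin (Θf s)).comp s hΘ
  have hsn2 : HasDerivAt (fun x => Real.sin (Θf x) ^ 2)
      (2 * Real.sin (Θf s) * (Real.cos (Θf s) * vθ)) s := by
    refine HasDerivAt.congr_deriv (hsinc.pow 2) ?_; push_cast; ring
  have hDbraw : HasDerivAt (fun x => Qφ x + a * T x * Real.sin (Θf x) ^ 2)
      (a * T s * (2 * Real.sin (Θf s) * (Real.cos (Θf s) * vθ))) s := by
    have h := hQφ.add ((hT.const_mul a).mul hsn2)
    refine HasDerivAt.congr_deriv (h) ?_; push_cast; ring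
  have hDbf : HasDerivAt (fun x => Dbb a (Θf x) (T x) (Qφ x))
      (a * T s * (2 * Real.sin (Θf s) * (Real.cos (Θf s) * vθ))) s := hDbraw
  have hDb2 : HasDerivAt (fun x => Dbb a (Θf x) (T x) (Qφ x) ^ 2)
      (2 * Dbb a (Θf s) (T s) (Qφ s)
        * (a * T s * (2 * Real.sin (Θf s) * (Real.cos (Θf s) * vθ)))) s := by
    refine HasDerivAt.congr_deriv (hDbf.pow 2) ?_; push_cast; ring
  have hsn2ne : Real.sin (Θf s) ^ 2 ≠ 0 := pow_ne_zero 2 hsn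
  have hQθ2 : HasDerivAt (fun x => Qθ x ^ 2) (2 * Qθ s * vqθ) s := by
    refine HasDerivAt.congr_deriv (hQθ.pow 2) ?_; push_cast; ring
  have h := hQθ2.add (hDb2.div hsn2 hsn2ne)
  refine HasDerivAt.congr_deriv (h) ?_
  subst hvθ hvqθ
  simp only [Vθ]
  field_simp
  ring

set_option maxHeartbeats 1000000 in
/-- `p := 2P` is conserved along the flow. -/
lemma conserved_p (M a Q : ℝ) (R Θf T X Qθ Qφ : ℝ → ℝ) (s : ℝ) (vr vθ vξ vqθ : ℝ)
    (hvr : vr = -(Δ M a Q (R s) * X s) / rho2 a (R s) (Θf s))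
    (hvθ : vθ = -Qθ s / rho2 a (R s) (Θf s))
    (hvξ : vξ = -Vr M a Q (R s) (Θf s) (T s) (X s) (Qθ s) (Qφ s))
    (hvqθ : vqθ = -Vθ M a Q (R s) (Θf s) (T s) (X s) (Qθ s) (Qφ s))
    (hΔ : Δ M a Q (R s) ≠ 0) (hsn : Real.sin (Θf s) ≠ 0) (hρ : rho2 a (R s) (Θf s) ≠ 0)
    (hR : HasDerivAt R vr s) (hΘ : HasDerivAt Θf vθ s) (hT : HasDerivAt T 0 s)
    (hX : HasDerivAt X vξ s) (hQθ : HasDerivAt Qθ vqθ s) (hQφ : HasDerivAt Qφ 0 s) :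
    HasDerivAt (fun x =>
      (Pbb a (R x) (T x) (Qφ x) ^ 2 / Δ M a Q (R x) - Δ M a Q (R x) * X x ^ 2
        - (Qθ x ^ 2 + Dbb a (Θf x) (T x) (Qφ x) ^ 2 / Real.sin (Θf x) ^ 2))
      / rho2 a (R x) (Θf x)) 0 s := by
  have hLA := LA M a Q R Θf T X Qθ Qφ s vr vξ hvr hvξ hΔ hsn hρ hR hT hX hQφ
  have hLB := LB M a Q R Θf T X Qθ Qφ s vθ vqθ hvθ hvqθ hΔ hsn hρ hΘ hT hQθ hQφ
  have hcosc : HasDerivAt (fun x => Real.cos (Θf x)) (-Real.sin (Θf s) * vθ) s :=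
    (Real.hasDerivAt_cos (Θf s)).comp s hΘ
  have hρraw : HasDerivAt (fun x => R x ^ 2 + a ^ 2 * Real.cos (Θf x) ^ 2)
      (2 * R s * vr + a ^ 2 * (2 * Real.cos (Θf s) * (-Real.sin (Θf s) * vθ))) s := by
    have h := (hR.pow 2).add ((hcosc.pow 2).const_mul (a ^ 2))
    refine HasDerivAt.congr_deriv (h) ?_; push_cast; ring
  have hρcf : HasDerivAt (fun x => rho2 a (R x) (Θf x))
      (2 * R s * vr + a ^ 2 * (2 * Real.cos (Θf s) * (-Real.sin (Θf s) * vθ))) s := hρraw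
  have hcomp := (hLA.sub hLB).div hρcf hρ
  refine HasDerivAt.congr_deriv (hcomp) ?_
  subst hvr hvθ
  simp only [Pi.sub_apply]
  field_simp
  ring

set_option maxHeartbeats 1000000 in
/-- The Carter constant is conserved along the flow. -/
lemma conserved_K (M a Q : ℝ) (R Θf T X Qθ Qφ Pf : ℝ → ℝ) (s : ℝ) (vθ vqθ : ℝ)
    (hvθ : vθ = -Qθ s / rho2 a (R s) (Θf s))
    (hvqθ : vqθ = -Vθ M a Q (R s) (Θf s) (T s) (X s) (Qθ s) (Qφ s))
    (hΔ : Δ M a Q (R s) ≠ 0) (hsn : Real.sin (Θf s) ≠ 0) (hρ : rho2 a (R s) (Θf s) ≠ 0)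
    (hΘ : HasDerivAt Θf vθ s) (hT : HasDerivAt T 0 s)
    (hQθ : HasDerivAt Qθ vqθ s) (hQφ : HasDerivAt Qφ 0 s)
    (hPf : HasDerivAt Pf 0 s)
    (hPfv : Pf s = (Pbb a (R s) (T s) (Qφ s) ^ 2 / Δ M a Q (R s) - Δ M a Q (R s) * X s ^ 2
        - (Qθ s ^ 2 + Dbb a (Θf s) (T s) (Qφ s) ^ 2 / Real.sin (Θf s) ^ 2))
      / rho2 a (R s) (Θf s)) :
    HasDerivAt (fun x => Qθ x ^ 2 + Dbb a (Θf x) (T x) (Qφ x) ^ 2 / Real.sin (Θf x) ^ 2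
        + Pf x * a ^ 2 * Real.cos (Θf x) ^ 2) 0 s := by
  have hLB := LB M a Q R Θf T X Qθ Qφ s vθ vqθ hvθ hvqθ hΔ hsn hρ hΘ hT hQθ hQφ
  have hcosc : HasDerivAt (fun x => Real.cos (Θf x)) (-Real.sin (Θf s) * vθ) s :=
    (Real.hasDerivAt_cos (Θf s)).comp s hΘ
  have hcos2 : HasDerivAt (fun x => Real.cos (Θf x) ^ 2)
      (2 * Real.cos (Θf s) * (-Real.sin (Θf s) * vθ)) s := by
    refine HasDerivAt.congr_deriv (hcosc.pow 2) ?_; push_cast; ring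
  have hPterm := (hPf.mul_const (a ^ 2)).mul hcos2
  have hcomp := hLB.add hPterm
  refine HasDerivAt.congr_deriv (hcomp) ?_
  rw [hPfv]
  subst hvθ
  field_simp
  ring

set_option maxHeartbeats 1000000 in
/-- constants of motion along Hamiltonian flow lines, and the two
expressions of the Carter constant. -/
theorem carter_constants_of_motion (M a Q : ℝ) (hM : 0 < M) (ha : 0 < a)
    (hsub : a ^ 2 + Q ^ 2 < M ^ 2) (γ : FlowLine M a Q) :
    (∀ s s' : ℝ, γ.τ s = γ.τ s') ∧
    (∀ s s' : ℝ, γ.qφ s = γ.qφ s') ∧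
    (∀ s s' : ℝ, pval M a Q γ s = pval M a Q γ s') ∧
    (∀ s s' : ℝ, Kc M a Q γ s = Kc M a Q γ s') ∧
    (∀ s : ℝ, Kc M a Q γ s =
      (Pb M a Q γ s) ^ 2 / Δ M a Q (γ.r s) - Δ M a Q (γ.r s) * (γ.ξ s) ^ 2
        - pval M a Q γ s * (γ.r s) ^ 2) := by
  have hsqnn := Real.sqrt_nonneg (M ^ 2 - (a ^ 2 + Q ^ 2))
  have hsq : Real.sqrt (M ^ 2 - (a ^ 2 + Q ^ 2)) ^ 2 = M ^ 2 - (a ^ 2 + Q ^ 2) :=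
    Real.sq_sqrt (by nlinarith)
  have hrpos : ∀ s, 0 < γ.r s := by
    intro s; have h := γ.hr s; simp only [rplus] at h; nlinarith
  have hΔpos : ∀ s, 0 < Δ M a Q (γ.r s) := by
    intro s; have h := γ.hr s; simp only [rplus] at h; simp only [Δ]; nlinarith
  have hsinpos : ∀ s, 0 < Real.sin (γ.θ s) :=
    fun s => Real.sin_pos_of_pos_of_lt_pi (γ.hθ s).1 (γ.hθ s).2
  have hρpos : ∀ s, 0 < rho2 a (γ.r s) (γ.θ s) := by
    intro s; have := hrpos s; simp only [rho2]; positivity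
  have hΔne : ∀ s, Δ M a Q (γ.r s) ≠ 0 := fun s => (hΔpos s).ne'
  have hρne : ∀ s, rho2 a (γ.r s) (γ.θ s) ≠ 0 := fun s => (hρpos s).ne'
  have hsne : ∀ s, Real.sin (γ.θ s) ≠ 0 := fun s => (hsinpos s).ne'
  -- τ and qφ are constant
  have hτ0 : ∀ x, HasDerivAt γ.τ 0 x := by
    intro x
    have h := γ.eq_τ x
    have hc : (fun u => P M a Q u (γ.r x) (γ.θ x) (γ.φ x) (γ.τ x) (γ.ξ x) (γ.qθ x) (γ.qφ x))
        = fun _ : ℝ => P M a Q 0 (γ.r x) (γ.θ x) (γ.φ x) (γ.τ x) (γ.ξ x) (γ.qθ x) (γ.qφ x) := rfl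
    rw [hc] at h
    simpa using h
  have hqφ0 : ∀ x, HasDerivAt γ.qφ 0 x := by
    intro x
    have h := γ.eq_qφ x
    have hc : (fun u => P M a Q (γ.t x) (γ.r x) (γ.θ x) u (γ.τ x) (γ.ξ x) (γ.qθ x) (γ.qφ x))
        = fun _ : ℝ => P M a Q (γ.t x) (γ.r x) (γ.θ x) 0 (γ.τ x) (γ.ξ x) (γ.qθ x) (γ.qφ x) := rfl
    rw [hc] at h
    simpa using h
  -- Hamilton's equations with explicit partial derivatives
  have hr' : ∀ x, HasDerivAt γ.r
      (-(Δ M a Q (γ.r x) * γ.ξ x) / rho2 a (γ.r x) (γ.θ x)) x := by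
    intro x
    have h := γ.eq_r x
    rw [(slice_xi M a Q (γ.t x) (γ.r x) (γ.θ x) (γ.φ x) (γ.τ x) (γ.qθ x) (γ.qφ x) (γ.ξ x)
      (hρne x)).deriv] at h
    exact h
  have hθ' : ∀ x, HasDerivAt γ.θ (-γ.qθ x / rho2 a (γ.r x) (γ.θ x)) x := by
    intro x
    have h := γ.eq_θ x
    rw [(slice_qt M a Q (γ.t x) (γ.r x) (γ.θ x) (γ.φ x) (γ.τ x) (γ.ξ x) (γ.qφ x) (γ.qθ x)
      (hρne x)).deriv] at h
    exact h
  have hξ' : ∀ x, HasDerivAt γ.ξ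
      (-Vr M a Q (γ.r x) (γ.θ x) (γ.τ x) (γ.ξ x) (γ.qθ x) (γ.qφ x)) x := by
    intro x
    have h := γ.eq_ξ x
    rw [(slice_r M a Q (γ.t x) (γ.θ x) (γ.φ x) (γ.τ x) (γ.ξ x) (γ.qθ x) (γ.qφ x) (γ.r x)
      (hΔne x) (hρne x) (hsne x)).deriv] at h
    exact h
  have hqθ' : ∀ x, HasDerivAt γ.qθ
      (-Vθ M a Q (γ.r x) (γ.θ x) (γ.τ x) (γ.ξ x) (γ.qθ x) (γ.qφ x)) x := by
    intro x
    have h := γ.eq_qθ x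
    rw [(slice_th M a Q (γ.t x) (γ.r x) (γ.φ x) (γ.τ x) (γ.ξ x) (γ.qθ x) (γ.qφ x) (γ.θ x)
      (hΔne x) (hrpos x).ne' (hsne x)).deriv] at h
    exact h
  -- the value of p = 2P along the flow
  have hpfun : pval M a Q γ = fun x =>
      (Pbb a (γ.r x) (γ.τ x) (γ.qφ x) ^ 2 / Δ M a Q (γ.r x)
        - Δ M a Q (γ.r x) * γ.ξ x ^ 2
        - (γ.qθ x ^ 2 + Dbb a (γ.θ x) (γ.τ x) (γ.qφ x) ^ 2 / Real.sin (γ.θ x) ^ 2))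
      / rho2 a (γ.r x) (γ.θ x) := by
    funext x
    have h1 := hΔne x
    have h2 := hρne x
    have h3 := hsne x
    simp only [rho2] at h2
    simp only [pval, P, sigma2, rho2, Pbb, Dbb]
    field_simp
    unfold Δ
    ring
  have hp0 : ∀ x, HasDerivAt (pval M a Q γ) 0 x := by
    intro x
    rw [hpfun]
    exact conserved_p M a Q γ.r γ.θ γ.τ γ.ξ γ.qθ γ.qφ x _ _ _ _ rfl rfl rfl rfl
      (hΔne x) (hsne x) (hρne x) (hr' x) (hθ' x) (hτ0 x) (hξ' x) (hqθ' x) (hqφ0 x)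
  have hKfun : Kc M a Q γ = fun x =>
      γ.qθ x ^ 2 + Dbb a (γ.θ x) (γ.τ x) (γ.qφ x) ^ 2 / Real.sin (γ.θ x) ^ 2
        + pval M a Q γ x * a ^ 2 * Real.cos (γ.θ x) ^ 2 := by
    funext x
    simp only [Kc, Dd, Dbb]
    ring
  have hK0 : ∀ x, HasDerivAt (Kc M a Q γ) 0 x := by
    intro x
    rw [hKfun]
    exact conserved_K M a Q γ.r γ.θ γ.τ γ.ξ γ.qθ γ.qφ (pval M a Q γ) x _ _ rfl rfl
      (hΔne x) (hsne x) (hρne x) (hθ' x) (hτ0 x) (hqθ' x) (hqφ0 x) (hp0 x)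
      (congrFun hpfun x)
  refine ⟨?_, ?_, ?_, ?_, ?_⟩
  · exact is_const_of_deriv_eq_zero (fun x => (hτ0 x).differentiableAt)
      (fun x => (hτ0 x).deriv)
  · exact is_const_of_deriv_eq_zero (fun x => (hqφ0 x).differentiableAt)
      (fun x => (hqφ0 x).deriv)
  · exact is_const_of_deriv_eq_zero (fun x => (hp0 x).differentiableAt)
      (fun x => (hp0 x).deriv)
  · exact is_const_of_deriv_eq_zero (fun x => (hK0 x).differentiableAt)
      (fun x => (hK0 x).deriv)
  · intro s
    have hps : pval M a Q γ s =
        (Pbb a (γ.r s) (γ.τ s) (γ.qφ s) ^ 2 / Δ M a Q (γ.r s)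
          - Δ M a Q (γ.r s) * γ.ξ s ^ 2
          - (γ.qθ s ^ 2 + Dbb a (γ.θ s) (γ.τ s) (γ.qφ s) ^ 2 / Real.sin (γ.θ s) ^ 2))
        / rho2 a (γ.r s) (γ.θ s) := congrFun hpfun s
    have h1 := hΔne s
    have h2 := hρne s
    have h3 := hsne s
    simp only [Δ, rho2] at h1 h2
    simp only [Δ, rho2, Pbb, Dbb] at hps
    simp only [Kc, Dd, Pb, Δ, rho2]
    rw [hps]
    field_simp
    ring

end Stmt0
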